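/- Let H be a strictly 2-balanced graph and let a,b be the endpoints of an edge e of H, with A = {a,b}. Then the pair (A,H) is strictly balanced: S_{A,H} = 1 and S_{B,H} < 1 for every B with A ⊊ B ⊊ V_H, where scalings are computed with p = n^{−(v_H−2)/(e_H−1)} and n > 1. -/

import Mathlib

def Strictly2Balanced {V : Type*} [Fintype V] (H : SimpleGraph V) : Prop :=
  3 ≤ Fintype.card V ∧ 3 ≤ H.edgeSet.ncard ∧
  ∀ K : H.Subgraph, K ≠ ⊤ → 3 ≤ K.verts.ncard →
    ((H.edgeSet.ncard : ℝ) - 1) / ((Fintype.card V : ℝ) - 2) >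
      ((K.edgeSet.ncard : ℝ) - 1) / ((K.verts.ncard : ℝ) - 2)

/-- `S_{A,Γ} = p^(e_Γ - e_{Γ[A]}) * n^(v_Γ - |A|)`, the extension scaling. -/
noncomputable def scalingPair {V : Type*} [Fintype V] (n p : ℝ)
    (Γ : SimpleGraph V) (A : Set V) : ℝ :=
  p ^ (Γ.edgeSet.ncard - (Γ.induce A).edgeSet.ncard) *
    n ^ (Fintype.card V - A.ncard)

lemma induce_edge_ncard {V : Type*} (H : SimpleGraph V) (B : Set V) :
    (H.induce B).edgeSet.ncard = ((⊤ : H.Subgraph).induce B).edgeSet.ncard := by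
  rw [SimpleGraph.induce_eq_coe_induce_top,
    ← SimpleGraph.Subgraph.image_coe_edgeSet_coe,
    Set.ncard_image_of_injective _ (Sym2.map.injective Subtype.val_injective)]
  rfl

lemma rpow_pow_mul (n : ℝ) (hn : 1 < n) (r : ℝ) (k m : ℕ) :
    (n ^ r) ^ k * n ^ m = n ^ (r * k + m) := by
  have h0 : (0:ℝ) < n := lt_trans zero_lt_one hn
  rw [← Real.rpow_natCast (n ^ r) k, ← Real.rpow_natCast n m,
    ← Real.rpow_mul h0.le, ← Real.rpow_add h0]

theorem stmt_5 {V : Type*} [Fintype V] (H : SimpleGraph V)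
    (h2b : Strictly2Balanced H) (n : ℝ) (hn : 1 < n) (p : ℝ)
    (hp : p = n ^ (-(((Fintype.card V : ℝ) - 2) / ((H.edgeSet.ncard : ℝ) - 1))))
    (a b : V) (hab : H.Adj a b) :
    scalingPair n p H {a, b} = 1 ∧
    ∀ B : Set V, ({a, b} : Set V) ⊂ B → B ⊂ Set.univ →
      scalingPair n p H B < 1 := by
  obtain ⟨hv3, he3, hbal⟩ := h2b
  set e := H.edgeSet.ncard with he_def
  set v := Fintype.card V with hv_def
  have hE3 : (3:ℝ) ≤ (e:ℝ) := by exact_mod_cast he3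
  have hV3 : (3:ℝ) ≤ (v:ℝ) := by exact_mod_cast hv3
  have hE1 : (0:ℝ) < (e:ℝ) - 1 := by linarith
  set r : ℝ := -(((v : ℝ) - 2) / ((e : ℝ) - 1)) with hr
  constructor
  · -- S_{A,H} = 1
    have hA2 : ({a, b} : Set V).ncard = 2 := Set.ncard_pair hab.ne
    have heA : (H.induce {a, b}).edgeSet.ncard = 1 := by
      rw [induce_edge_ncard, ← SimpleGraph.Subgraph.subgraphOfAdj_eq_induce hab,
        SimpleGraph.edgeSet_subgraphOfAdj, Set.ncard_singleton]
    rw [scalingPair, heA, hA2, hp, rpow_pow_mul n hn]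
    have hk : ((e - 1 : ℕ) : ℝ) = (e:ℝ) - 1 := by
      rw [Nat.cast_sub (by omega)]; norm_num
    have hm : ((v - 2 : ℕ) : ℝ) = (v:ℝ) - 2 := by
      rw [Nat.cast_sub (by omega)]; norm_num
    rw [hk, hm]
    have : -(((v : ℝ) - 2) / ((e : ℝ) - 1)) * ((e:ℝ) - 1) + ((v:ℝ) - 2) = 0 := by
      field_simp; ring
    rw [this, Real.rpow_zero]
  · intro B hAB hBU
    set K : H.Subgraph := (⊤ : H.Subgraph).induce B with hK
    have hKverts : K.verts = B := rfl
    have hKne : K ≠ ⊤ := by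
      intro h
      have : K.verts = (⊤ : H.Subgraph).verts := by rw [h]
      rw [hKverts] at this
      simp only [SimpleGraph.Subgraph.verts_top] at this
      exact hBU.ne this
    have haB : a ∈ B := hAB.subset (by simp)
    have hbB : b ∈ B := hAB.subset (by simp)
    have hB3 : 3 ≤ B.ncard := by
      have h2 : ({a, b} : Set V).ncard = 2 := Set.ncard_pair hab.ne
      have := Set.ncard_lt_ncard hAB B.toFinite
      omega
    have hlt := hbal K hKne (by rw [hKverts]; exact hB3)
    set eB := K.edgeSet.ncard with heB
    have heBe : eB ≤ e := Set.ncard_le_ncard K.edgeSet_subset H.edgeSet.toFinite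
    have heB1 : 1 ≤ eB := by
      have hmem : s(a, b) ∈ K.edgeSet := by
        simp only [hK, SimpleGraph.Subgraph.mem_edgeSet,
          SimpleGraph.Subgraph.induce_adj, SimpleGraph.Subgraph.top_adj]
        exact ⟨haB, hbB, hab⟩
      have : 0 < eB := (Set.ncard_pos K.edgeSet.toFinite).mpr ⟨_, hmem⟩
      omega
    have hBv : B.ncard ≤ v := by
      have := Set.ncard_le_ncard (Set.subset_univ B) (Set.finite_univ)
      rwa [Set.ncard_univ, Nat.card_eq_fintype_card] at this
    have hBr3 : (3:ℝ) ≤ (B.ncard : ℝ) := by exact_mod_cast hB3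
    rw [scalingPair, induce_edge_ncard, ← hK, ← heB, hp, rpow_pow_mul n hn]
    have hk : ((e - eB : ℕ) : ℝ) = (e:ℝ) - (eB:ℝ) := by
      rw [Nat.cast_sub heBe]
    have hm : ((v - B.ncard : ℕ) : ℝ) = (v:ℝ) - (B.ncard:ℝ) := by
      rw [Nat.cast_sub hBv]
    rw [hk, hm]
    apply Real.rpow_lt_one_of_one_lt_of_neg hn
    rw [hKverts] at hlt
    have hBr2 : (0:ℝ) < (B.ncard:ℝ) - 2 := by linarith
    have hV2 : (0:ℝ) < (v:ℝ) - 2 := by linarith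
    have hcross : ((eB:ℝ) - 1) * ((v:ℝ) - 2) < ((e:ℝ) - 1) * ((B.ncard:ℝ) - 2) := by
      have := (div_lt_div_iff₀ hBr2 hV2).mp hlt
      linarith
    have hkey : ((v:ℝ) - (B.ncard:ℝ)) * ((e:ℝ) - 1) < ((v:ℝ) - 2) * ((e:ℝ) - (eB:ℝ)) := by
      nlinarith
    have heq : -(((v : ℝ) - 2) / ((e : ℝ) - 1)) * ((e:ℝ) - (eB:ℝ)) + ((v:ℝ) - (B.ncard:ℝ)) =
        (((v:ℝ) - (B.ncard:ℝ)) * ((e:ℝ) - 1) - ((v:ℝ) - 2) * ((e:ℝ) - (eB:ℝ))) / ((e:ℝ) - 1) := by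
      field_simp
      ring
    rw [heq]
    exact div_neg_of_neg_of_pos (by linarith) hE1
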